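/- Let f : [0,1] → [0,∞) be a decreasing function with ∫₀¹ f(t) dt = 1 (a p-to-e calibrator). If P is a p-variable (P(P ≤ t) ≤ t for all t ∈ (0,1)), then f(P) is an e-variable, i.e., E[f(P)] ≤ 1. -/

import Mathlib

open MeasureTheory
open scoped ENNReal

/-- **p-to-e calibrators produce e-variables.** Let `f : [0,1] → [0,∞)` be decreasing with
`∫₀¹ f(t) dt = 1`. If `P` is a p-variable (`ℙ(P ≤ t) ≤ t` for all `t ∈ (0,1)`) taking values
in `[0,1]`, then `f(P)` is an e-variable: `𝔼[f(P)] ≤ 1`. -/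
theorem calibrator_gives_evariable
    {Ω : Type*} [MeasurableSpace Ω] (μ : Measure Ω) [IsProbabilityMeasure μ]
    (f : ℝ → ℝ)
    (hf_anti : AntitoneOn f (Set.Icc (0 : ℝ) 1))
    (hf_nonneg : ∀ t ∈ Set.Icc (0 : ℝ) 1, 0 ≤ f t)
    (hf_int : ∫ t in (0 : ℝ)..1, f t = 1)
    (P : Ω → ℝ) (hPmeas : Measurable P)
    (hPrange : ∀ ω, P ω ∈ Set.Icc (0 : ℝ) 1)
    (hPsub : ∀ t : ℝ, t ∈ Set.Ioo (0 : ℝ) 1 → (μ {ω | P ω ≤ t}).toReal ≤ t) :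
    ∫⁻ ω, ENNReal.ofReal (f (P ω)) ∂μ ≤ 1 := by
  classical
  -- clamp to get a globally antitone function
  set g : ℝ → ℝ := fun t => f (max 0 (min 1 t)) with hg_def
  have hclamp_mem : ∀ t : ℝ, max 0 (min 1 t) ∈ Set.Icc (0 : ℝ) 1 := by
    intro t
    constructor
    · exact le_max_left _ _
    · exact max_le zero_le_one (min_le_left _ _)
  have hclamp_mono : Monotone (fun t : ℝ => max 0 (min 1 t)) := by
    intro s t hst
    exact max_le_max le_rfl (min_le_min le_rfl hst)
  have hg_anti : Antitone g := by
    intro s t hst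
    exact hf_anti (hclamp_mem s) (hclamp_mem t) (hclamp_mono hst)
  have hg_nonneg : ∀ t, 0 ≤ g t := fun t => hf_nonneg _ (hclamp_mem t)
  have hg_eq : ∀ t ∈ Set.Icc (0 : ℝ) 1, g t = f t := by
    intro t ht
    simp only [hg_def]
    rw [min_eq_right ht.2, max_eq_right ht.1]
  have hg_meas : Measurable g := hg_anti.measurable
  -- rewrite the integrand using g
  have hrw : ∀ ω, ENNReal.ofReal (f (P ω)) = ENNReal.ofReal (g (P ω)) := by
    intro ω; rw [hg_eq _ (hPrange ω)]
  simp only [hrw]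
  -- layer cake for the LHS
  have hLHS : ∫⁻ ω, ENNReal.ofReal (g (P ω)) ∂μ
      = ∫⁻ x in Set.Ioi (0 : ℝ), μ {ω | x < g (P ω)} := by
    exact lintegral_eq_lintegral_meas_lt μ (Filter.Eventually.of_forall fun ω => hg_nonneg _)
      ((hg_meas.comp hPmeas).aemeasurable)
  -- layer cake for g on [0,1] with Lebesgue measure
  have hg_intOn : IntegrableOn g (Set.Icc (0 : ℝ) 1) volume :=
    AntitoneOn.integrableOn_isCompact isCompact_Icc (hg_anti.antitoneOn _)
  have hRHS : ∫⁻ x in Set.Ioi (0 : ℝ), (volume.restrict (Set.Icc (0:ℝ) 1)) {t | x < g t}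
      = ∫⁻ t in Set.Icc (0:ℝ) 1, ENNReal.ofReal (g t) := by
    exact (lintegral_eq_lintegral_meas_lt (volume.restrict (Set.Icc (0:ℝ) 1))
      (Filter.Eventually.of_forall fun t => hg_nonneg _) hg_meas.aemeasurable).symm
  -- value of the RHS
  have hval : ∫⁻ t in Set.Icc (0:ℝ) 1, ENNReal.ofReal (g t) = 1 := by
    rw [← ofReal_integral_eq_lintegral_ofReal hg_intOn
      (Filter.Eventually.of_forall fun t => hg_nonneg _)]
    have : ∫ t in Set.Icc (0:ℝ) 1, g t = ∫ t in (0:ℝ)..1, f t := by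
      rw [MeasureTheory.integral_Icc_eq_integral_Ioc,
        ← intervalIntegral.integral_of_le (zero_le_one)]
      apply intervalIntegral.integral_congr
      intro t ht
      rw [Set.uIcc_of_le zero_le_one] at ht
      exact hg_eq t ht
    rw [this, hf_int, ENNReal.ofReal_one]
  -- pointwise comparison of slice measures
  have hslice : ∀ x ∈ Set.Ioi (0:ℝ),
      μ {ω | x < g (P ω)} ≤ (volume.restrict (Set.Icc (0:ℝ) 1)) {t | x < g t} := by
    intro x hx
    set S : Set ℝ := {t | x < g t} ∩ Set.Icc 0 1 with hS_def
    have hSmeas : MeasurableSet ({t : ℝ | x < g t}) :=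
      measurableSet_lt measurable_const hg_meas
    rw [Measure.restrict_apply hSmeas]
    by_cases hSne : S.Nonempty
    · -- the sup of the slice
      have hbdd : BddAbove S := BddAbove.mono Set.inter_subset_right (bddAbove_Icc)
      set a : ℝ := sSup S with ha_def
      have haS : ∀ s ∈ S, s ≤ a := fun s hs => le_csSup hbdd hs
      obtain ⟨t₀, ht₀⟩ := id hSne
      have ha_mem : a ∈ Set.Icc (0:ℝ) 1 := by
        constructor
        · exact le_trans ht₀.2.1 (haS _ ht₀)
        · exact csSup_le hSne fun s hs => hs.2.2
      -- lower set property: Ico 0 a ⊆ S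
      have hlow : Set.Ico (0:ℝ) a ⊆ S := by
        intro s hs
        obtain ⟨u, huS, hsu⟩ := exists_lt_of_lt_csSup hSne hs.2
        refine ⟨?_, hs.1, le_trans hsu.le huS.2.2⟩
        exact lt_of_lt_of_le huS.1 (hg_anti hsu.le)
      have hvol : ENNReal.ofReal a ≤ volume ({t : ℝ | x < g t} ∩ Set.Icc 0 1) := by
        calc ENNReal.ofReal a = volume (Set.Ico (0:ℝ) a) := by
              rw [Real.volume_Ico, sub_zero]
          _ ≤ _ := measure_mono hlow
      refine le_trans ?_ hvol
      -- μ {ω | x < g (P ω)} ≤ ofReal a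
      have hsub : {ω | x < g (P ω)} ⊆ {ω | P ω ≤ a} := by
        intro ω hω
        exact haS _ ⟨hω, hPrange ω⟩
      rcases eq_or_lt_of_le ha_mem.2 with h1 | h1
      · -- a = 1
        calc μ {ω | x < g (P ω)} ≤ 1 := prob_le_one
          _ = ENNReal.ofReal a := by rw [h1, ENNReal.ofReal_one]
      · -- a < 1
        have hfin : μ {ω | P ω ≤ a} ≠ ⊤ := measure_ne_top μ _
        have key : (μ {ω | P ω ≤ a}).toReal ≤ a := by
          apply le_of_forall_pos_le_add
          intro ε hε
          set t : ℝ := min (a + ε) ((a + 1) / 2) with ht_def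
          have hat : a < t := lt_min (by linarith) (by linarith)
          have ht1 : t < 1 := lt_of_le_of_lt (min_le_right _ _) (by linarith)
          have ht0 : 0 < t := lt_of_le_of_lt ha_mem.1 hat
          have := hPsub t ⟨ht0, ht1⟩
          have hmono : (μ {ω | P ω ≤ a}).toReal ≤ (μ {ω | P ω ≤ t}).toReal := by
            apply ENNReal.toReal_mono (measure_ne_top μ _)
            exact measure_mono fun ω hω => le_trans hω hat.le
          calc (μ {ω | P ω ≤ a}).toReal ≤ t := le_trans hmono this
            _ ≤ a + ε := min_le_left _ _
        calc μ {ω | x < g (P ω)} ≤ μ {ω | P ω ≤ a} := measure_mono hsub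
          _ = ENNReal.ofReal ((μ {ω | P ω ≤ a}).toReal) := (ENNReal.ofReal_toReal hfin).symm
          _ ≤ ENNReal.ofReal a := ENNReal.ofReal_le_ofReal key
    · -- slice empty: the ω-set is also empty
      have hempty : {ω | x < g (P ω)} = ∅ := by
        ext ω
        simp only [Set.mem_setOf_eq, Set.mem_empty_iff_false, iff_false, not_lt]
        by_contra h
        push_neg at h
        exact hSne ⟨P ω, h, hPrange ω⟩
      rw [hempty, measure_empty]
      exact zero_le
  calc ∫⁻ ω, ENNReal.ofReal (g (P ω)) ∂μ
      = ∫⁻ x in Set.Ioi (0 : ℝ), μ {ω | x < g (P ω)} := hLHS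
    _ ≤ ∫⁻ x in Set.Ioi (0 : ℝ), (volume.restrict (Set.Icc (0:ℝ) 1)) {t | x < g t} :=
        lintegral_mono_ae ((ae_restrict_iff' measurableSet_Ioi).2
          (Filter.Eventually.of_forall hslice))
    _ = ∫⁻ t in Set.Icc (0:ℝ) 1, ENNReal.ofReal (g t) := hRHS
    _ = 1 := hval
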